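/- arXiv:2511.03082 — 3 statements merged into one kernel-verified Lean document; each statement's English description precedes it below -/
import Mathlib

section
/- For all natural numbers n and 1 ≤ k ≤ n-1, P_n(x) = (1+x^2)^k · P_{n-k}(x) + (1-x)·Σ_{j=0}^{k-1} B(n-j-1,0)·(1+x^2)^j·x^{n-j}, where P_n is the Pascalian polynomial and B(m,0) = C(m, ⌊m/2⌋). -/
open Polynomial

def B (n k : ℕ) : ℕ := Nat.choose n ((n - k) / 2)

noncomputable def P (n : ℕ) : Polynomial ℤ :=
  ∑ k ∈ Finset.range (n + 1), C ((B n k : ℤ)) * X ^ (n - k)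

lemma P_eq (n : ℕ) : P n = ∑ i ∈ Finset.range (n+1), C ((n.choose (i/2) : ℤ)) * X ^ i := by
  unfold P
  rw [← Finset.sum_range_reflect]
  apply Finset.sum_congr rfl
  intro j hj
  simp only [Finset.mem_range] at hj
  have h1 : n + 1 - 1 - j = n - j := by omega
  have h2 : n - (n - j) = j := by omega
  rw [h1, B, h2]

lemma key (m : ℕ) : (m+2).choose ((m+2)/2) = (m+1).choose (m/2) + (m+1).choose ((m+1)/2) := by
  rcases Nat.even_or_odd m with ⟨c, hc⟩ | ⟨c, hc⟩
  · subst hc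
    have h1 : (c + c + 2)/2 = c + 1 := by omega
    have h2 : (c + c)/2 = c := by omega
    have h3 : (c + c + 1)/2 = c := by omega
    rw [h1, h2, h3, Nat.choose_succ_succ]
    have : (c + c + 1).choose (c+1) = (c + c + 1).choose c := by
      rw [← Nat.choose_symm (by omega : c + 1 ≤ c + c + 1)]
      congr 1; omega
    simp only [Nat.succ_eq_add_one] at this ⊢
    omega
  · subst hc
    have h1 : (2*c + 1 + 2)/2 = c + 1 := by omega
    have h2 : (2*c + 1)/2 = c := by omega
    have h3 : (2*c + 1 + 1)/2 = c + 1 := by omega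
    rw [h1, h2, h3, Nat.choose_succ_succ]

lemma step (m : ℕ) : P (m+2) = (1+X^2) * P (m+1) + (1-X) * C ((B (m+1) 0 : ℤ)) * X ^ (m+2) := by
  rw [P_eq, P_eq]
  have hB : (B (m+1) 0 : ℤ) = ((m+1).choose ((m+1)/2) : ℤ) := by simp [B]
  rw [hB, add_mul, one_mul, Finset.mul_sum]
  -- rewrite X^2 * (C a * X^i) = C a * X^(i+2)
  have hsh : ∀ i : ℕ, X^2 * (C (((m+1).choose (i/2) : ℤ)) * X ^ i)
      = C (((m+1).choose (i/2) : ℤ)) * X ^ (i+2) := by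
    intro i; ring
  simp only [hsh]
  -- peel LHS
  rw [Finset.sum_range_succ' _ (m+2), Finset.sum_range_succ' _ (m+1), Finset.sum_range_succ _ m]
  -- peel RHS first sum
  rw [Finset.sum_range_succ' (fun i => C (((m+1).choose (i/2) : ℤ)) * X ^ i) (m+1),
      Finset.sum_range_succ' (fun k => C (((m+1).choose ((k+1)/2) : ℤ)) * X ^ (k+1)) m]
  -- peel RHS shifted sum: last two terms
  rw [Finset.sum_range_succ (fun i => C (((m+1).choose (i/2) : ℤ)) * X ^ (i+2)) (m+1),
      Finset.sum_range_succ (fun i => C (((m+1).choose (i/2) : ℤ)) * X ^ (i+2)) m]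
  have hsum : ∀ x ∈ Finset.range m, C (((m + 2).choose ((x + 1 + 1) / 2) : ℤ)) * X ^ (x + 1 + 1)
      = C (((m + 1).choose ((x + 1 + 1) / 2) : ℤ)) * X ^ (x + 1 + 1)
        + C (((m + 1).choose (x / 2) : ℤ)) * X ^ (x + 2) := by
    intro x _
    have hd : (x + 1 + 1)/2 = x/2 + 1 := by omega
    rw [hd, Nat.choose_succ_succ']
    push_cast
    rw [C_add]
    ring
  rw [Finset.sum_congr rfl hsum, Finset.sum_add_distrib]
  have hk2 : ((m + 2).choose ((m + 1 + 1) / 2) : ℤ)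
      = ((m + 1).choose (m / 2) : ℤ) + ((m + 1).choose ((m + 1) / 2) : ℤ) := by
    have e : m + 1 + 1 = m + 2 := rfl
    rw [e]
    exact_mod_cast key m
  rw [hk2, C_add]
  norm_num
  ring

theorem pascalian_extended_recursion (n k : ℕ) (hk1 : 1 ≤ k) (hk : k ≤ n - 1) :
    P n = (1 + X ^ 2) ^ k * P (n - k) +
      (1 - X) * ∑ j ∈ Finset.range k,
        C ((B (n - j - 1) 0 : ℤ)) * (1 + X ^ 2) ^ j * X ^ (n - j) := by
  induction k with
  | zero => omega
  | succ k ih =>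
    rcases Nat.eq_zero_or_pos k with rfl | hkpos
    · have hn : 2 ≤ n := by omega
      obtain ⟨m, rfl⟩ : ∃ m, n = m + 2 := ⟨n - 2, by omega⟩
      rw [show m + 2 - 1 = m + 1 from rfl, step m, Finset.sum_range_one]
      norm_num
      ring
    · have hk' : k ≤ n - 1 := by omega
      rw [ih hkpos hk']
      have hn : k + 2 ≤ n := by omega
      obtain ⟨m, hm⟩ : ∃ m, n - k = m + 2 := ⟨n - k - 2, by omega⟩
      have e1 : n - (k + 1) = m + 1 := by omega
      have e2 : n - k - 1 = m + 1 := by omega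
      rw [hm, step m, e1, Finset.sum_range_succ, e2, hm]
      ring
end

section
/- For every odd natural number n = 2m+1, P_n(x) = (1+x)·q_n(x^2) as polynomials, where q_n(x) = Σ_{k=0}^{⌊n/2⌋} C(n,k)·x^k and P_n(x) = Σ_{k=0}^n B(n,k)·x^{n-k} with B(n,k) = C(n, ⌊(n-k)/2⌋). -/
open Polynomial

noncomputable def q (n : ℕ) : Polynomial ℤ :=
  ∑ k ∈ Finset.range (n / 2 + 1), C ((Nat.choose n k : ℤ)) * X ^ k

lemma sum_range_even_odd {M : Type*} [AddCommMonoid M] (f : ℕ → M) (m : ℕ) :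
    ∑ j ∈ Finset.range (2 * m), f j =
      (∑ i ∈ Finset.range m, f (2 * i)) + ∑ i ∈ Finset.range m, f (2 * i + 1) := by
  induction m with
  | zero => simp
  | succ m ih =>
      rw [Nat.mul_succ, Finset.sum_range_succ, Finset.sum_range_succ, ih,
        Finset.sum_range_succ, Finset.sum_range_succ]
      abel

theorem pascalian_odd_factorization (n m : ℕ) (h : n = 2 * m + 1) :
    P n = (1 + X) * (q n).comp (X ^ 2) := by
  subst h
  have hP : P (2 * m + 1) =
      ∑ j ∈ Finset.range (2 * m + 1 + 1),
        C ((Nat.choose (2 * m + 1) (j / 2) : ℤ)) * X ^ j := by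
    rw [P]
    rw [← Finset.sum_range_reflect
      (fun j => C ((Nat.choose (2 * m + 1) (j / 2) : ℤ)) * X ^ j) (2 * m + 1 + 1)]
    apply Finset.sum_congr rfl
    intro k hk
    simp only [Finset.mem_range] at hk
    have : 2 * m + 1 + 1 - 1 - k = 2 * m + 1 - k := by omega
    rw [this, B]
  have hq : (q (2 * m + 1)).comp (X ^ 2) =
      ∑ i ∈ Finset.range (m + 1), C ((Nat.choose (2 * m + 1) i : ℤ)) * X ^ (2 * i) := by
    rw [q]
    have : (2 * m + 1) / 2 = m := by omega
    rw [this]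
    simp [Polynomial.comp, Polynomial.eval₂_finset_sum, pow_mul]
  rw [hP, hq]
  have h2 : 2 * m + 1 + 1 = 2 * (m + 1) := by ring
  rw [h2, sum_range_even_odd]
  rw [add_mul, one_mul, Finset.mul_sum]
  congr 1
  · apply Finset.sum_congr rfl
    intro i _
    have : 2 * i / 2 = i := by omega
    rw [this]
  · apply Finset.sum_congr rfl
    intro i _
    have : (2 * i + 1) / 2 = i := by omega
    rw [this]
    ring
end

section
/- For every odd natural number n, -1 is a root of the Pascalian polynomial P_n, and for every even natural number n, P_n(-1) = C(n, n/2). -/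
open Polynomial

lemma aux_sum (n : ℕ) : ∀ m, ∑ j ∈ Finset.range m, (Nat.choose n (j / 2) : ℤ) * (-1) ^ j
    = if Even m then 0 else Nat.choose n (m / 2) := by
  intro m
  induction m with
  | zero => simp
  | succ m ih =>
    rw [Finset.sum_range_succ, ih]
    rcases Nat.even_or_odd m with h | h
    · obtain ⟨t, rfl⟩ := h
      have h1 : ¬ Even (t + t + 1) := by simp [Nat.even_add_one, ← two_mul]
      have h2 : (t + t) / 2 = t := by omega
      have h3 : (t + t + 1) / 2 = t := by omega
      have h4 : (2 * t + 1) / 2 = t := by omega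
      simp [Nat.even_add_one, h2, h3, h4, (by decide : Even 2), Even.neg_one_pow, ← two_mul]
    · obtain ⟨t, rfl⟩ := h
      have h1 : (2 * t + 1) / 2 = t := by omega
      have h2 : Even (2 * t + 1 + 1) := ⟨t + 1, by ring⟩
      simp [h1, h2, pow_succ, pow_mul]

theorem pascalian_trivial_root (n : ℕ) :
    (Odd n → (P n).eval (-1) = 0) ∧ (Even n → (P n).eval (-1) = Nat.choose n (n / 2)) := by
  have key : (P n).eval (-1) = ∑ j ∈ Finset.range (n + 1), (Nat.choose n (j / 2) : ℤ) * (-1) ^ j := by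
    rw [P]
    rw [Polynomial.eval_finset_sum]
    simp only [eval_mul, eval_C, eval_pow, eval_X, B]
    rw [← Finset.sum_range_reflect (fun j => (Nat.choose n (j / 2) : ℤ) * (-1) ^ j) (n + 1)]
    apply Finset.sum_congr rfl
    intro k hk
    simp only [Finset.mem_range] at hk
    have : n + 1 - 1 - k = n - k := by omega
    rw [this]
  rw [key, aux_sum]
  constructor
  · intro h
    simp [Nat.even_add_one, Nat.not_even_iff_odd.mpr h]
  · intro h
    obtain ⟨t, rfl⟩ := h
    have h1 : ¬ Even (t + t + 1) := by simp [Nat.even_add_one, ← two_mul]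
    have h2 : (t + t + 1) / 2 = t := by omega
    have h3 : (t + t) / 2 = t := by omega
    simp [h1, h2, h3]
end
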